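/- Let (X,‖·‖) be a reflexive Banach space with dual (X*,‖·‖_*), let L > 0, σ > 0, N ≥ 1, let {a_{k,i}}_{0≤i<k≤N} and {b_{k,i}}_{0≤i≤k≤N} be real coefficients with b_{0,0} = −1, let u_0 ≤ u_1 ≤ … ≤ u_N be positive reals, and set v_i = 1/u_{N−i} for i = 0, …, N. Define U: (X*)^{N+1} × X^{N+1} → ℝ by U(A_0,…,A_N, B_0,…,B_N) = Σ_{k=0}^{N−1} (u_k/(2L)) ‖A_k − A_{k+1}‖_*² + Σ_{k=0}^{N−1} (σ/2) ‖B_k − B_{k+1}‖² + Σ_{k=0}^{N−1} ⟨Σ_{i=0}^{k} a_{k+1,i} A_i, B_{k+1}⟩ − Σ_{k=0}^{N} u_k ⟨A_k − A_{k+1}, x_k⟩, where A_{N+1} := 0, x_0 := B_0, and x_{k+1} := x_k − Σ_{i=0}^{k+1} b_{k+1,i} B_i. Define V: (X*)^{N+1} × X^{N+1} → ℝ by V(C_0,…,C_N, D_0,…,D_N) = Σ_{k=0}^{N−1} (v_{k+1}/(2L)) ‖C_k − C_{k+1}‖_*² + Σ_{k=0}^{N−1} (σ/2) ‖D_k − D_{k+1}‖²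 + Σ_{k=0}^{N} ⟨Σ_{i=0}^{k} b_{N−i,N−k} C_i, D_k⟩ + Σ_{k=0}^{N−1} ⟨v_{k+1} C_{k+1} − Σ_{j=0}^{k} (v_{j+1} − v_j) C_j, Σ_{i=0}^{k} a_{N−i,N−1−k} D_i⟩. Then the infimum of U over all (A_0,…,A_N, B_0,…,B_N) ∈ (X*)^{N+1} × X^{N+1} equals the infimum of V over all (C_0,…,C_N, D_0,…,D_N) ∈ (X*)^{N+1} × X^{N+1} (as values in ℝ ∪ {−∞}). -/

import Mathlib

open NormedSpace Finset

section MirrorDuality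

variable (X : Type*) [NormedAddCommGroup X] [NormedSpace ℝ X]

/-- Extension of a tuple indexed by `Fin (N+1)` to `ℕ` by zero; in particular
it implements the convention `A_{N+1} := 0`. -/
def extZ {α : Type*} [Zero α] (N : ℕ) (A : Fin (N + 1) → α) : ℕ → α :=
  fun i => if h : i < N + 1 then A ⟨i, h⟩ else 0

/-- The auxiliary sequence `x_0 = B_0`, `x_{k+1} = x_k - ∑_{i=0}^{k+1} b_{k+1,i} B_i`
appearing in the definition of the primal residual functional `U`. -/
noncomputable def xAux (b : ℕ → ℕ → ℝ) (B : ℕ → X) : ℕ → X :=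
  fun k => B 0 - ∑ j ∈ range k, ∑ i ∈ range (j + 2), b (j + 1) i • B i

/-- The primal residual functional
`U(A,B) = ∑_{k<N} (u_k/(2L))‖A_k-A_{k+1}‖_*² + ∑_{k<N} (σ/2)‖B_k-B_{k+1}‖²
 + ∑_{k<N} ⟨∑_{i≤k} a_{k+1,i}A_i, B_{k+1}⟩ - ∑_{k≤N} u_k ⟨A_k-A_{k+1}, x_k⟩`,
with the convention `A_{N+1} = 0` (only values `A_0,…,A_N`, `B_0,…,B_N` are read). -/
noncomputable def primalU (N : ℕ) (L σ : ℝ) (u : ℕ → ℝ) (a b : ℕ → ℕ → ℝ)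
    (A : ℕ → StrongDual ℝ X) (B : ℕ → X) : ℝ :=
  -- `A` with the convention `A_{N+1} := 0`
  let Az : ℕ → StrongDual ℝ X := fun i => if i ≤ N then A i else 0
  (∑ k ∈ range N, u k / (2 * L) * ‖A k - A (k + 1)‖ ^ 2)
    + (∑ k ∈ range N, σ / 2 * ‖B k - B (k + 1)‖ ^ 2)
    + (∑ k ∈ range N, (∑ i ∈ range (k + 1), a (k + 1) i • A i) (B (k + 1)))
    - ∑ k ∈ range (N + 1), u k * (Az k - Az (k + 1)) (xAux X b B k)

/-- The dual residual functional
`V(C,D) = ∑_{k<N} (v_{k+1}/(2L))‖C_k-C_{k+1}‖_*² + ∑_{k<N} (σ/2)‖D_k-D_{k+1}‖²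
 + ∑_{k≤N} ⟨∑_{i≤k} b_{N-i,N-k}C_i, D_k⟩
 + ∑_{k<N} ⟨v_{k+1}C_{k+1} - ∑_{j≤k}(v_{j+1}-v_j)C_j, ∑_{i≤k} a_{N-i,N-1-k}D_i⟩`. -/
noncomputable def dualV (N : ℕ) (L σ : ℝ) (v : ℕ → ℝ) (a b : ℕ → ℕ → ℝ)
    (C : ℕ → StrongDual ℝ X) (D : ℕ → X) : ℝ :=
  (∑ k ∈ range N, v (k + 1) / (2 * L) * ‖C k - C (k + 1)‖ ^ 2)
    + (∑ k ∈ range N, σ / 2 * ‖D k - D (k + 1)‖ ^ 2)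
    + (∑ k ∈ range (N + 1), (∑ i ∈ range (k + 1), b (N - i) (N - k) • C i) (D k))
    + ∑ k ∈ range N,
        (v (k + 1) • C (k + 1) - ∑ j ∈ range (k + 1), (v (j + 1) - v j) • C j)
          (∑ i ∈ range (k + 1), a (N - i) (N - 1 - k) • D i)


namespace MirrorDualityAux

open NormedSpace Finset

variable {X : Type*} [NormedAddCommGroup X] [NormedSpace ℝ X]

/-- Triangle sum swap. -/
lemma sum_tri (n : ℕ) (f : ℕ → ℕ → ℝ) :
    ∑ k ∈ range n, ∑ j ∈ range (k + 1), f k j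
      = ∑ j ∈ range n, ∑ k ∈ Ico j n, f k j := by
  induction n with
  | zero => simp
  | succ n ih =>
    rw [Finset.sum_range_succ, ih, Finset.sum_range_succ (fun j => ∑ k ∈ Ico j (n+1), f k j)]
    have h1 : ∀ j ∈ range n, ∑ k ∈ Ico j (n+1), f k j
        = (∑ k ∈ Ico j n, f k j) + f n j := by
      intro j hj
      rw [Finset.sum_Ico_succ_top (le_of_lt (mem_range.mp hj))]
    rw [Finset.sum_congr rfl h1, Finset.sum_add_distrib]
    have h2 : ∑ k ∈ Ico n (n+1), f k n = f n n := by
      rw [Nat.Ico_succ_singleton, Finset.sum_singleton]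
    rw [h2, Finset.sum_range_succ (fun j => f n j)]
    ring

/-- The mirror map on the dual variables. -/
noncomputable def phiC (N : ℕ) (u : ℕ → ℝ) (A : ℕ → StrongDual ℝ X) : ℕ → StrongDual ℝ X :=
  fun k => -(u (N - k) • A (N - k))
    - ∑ j ∈ range k, (u (N - j) - u (N - j - 1)) • A (N - j)

/-- The mirror map on the primal variables. -/
def phiD (N : ℕ) (B : ℕ → X) : ℕ → X := fun k => -B (N - k)

/-- Inverse of `phiC` (on indices `≤ N`). -/
noncomputable def psiA (N : ℕ) (u : ℕ → ℝ) (C : ℕ → StrongDual ℝ X) : ℕ → StrongDual ℝ X :=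
  fun m => (1 / u N) • (-C 0)
    + ∑ j ∈ Ico m N, (1 / u j) • (C (N - j - 1) - C (N - j))

/-- Inverse of `phiD` (on indices `≤ N`). -/
def psiB (N : ℕ) (D : ℕ → X) : ℕ → X := fun m => -D (N - m)

lemma phiC_zero (N : ℕ) (u : ℕ → ℝ) (A : ℕ → StrongDual ℝ X) :
    phiC N u A 0 = -(u N • A N) := by
  simp [phiC]

lemma phiC_sub {N k : ℕ} (hk : k < N) (u : ℕ → ℝ) (A : ℕ → StrongDual ℝ X) :
    phiC N u A k - phiC N u A (k + 1)
      = u (N - 1 - k) • (A (N - 1 - k) - A (N - k)) := by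
  have e1 : N - (k + 1) = N - 1 - k := by omega
  have e2 : N - k - 1 = N - 1 - k := by omega
  simp only [phiC, Finset.sum_range_succ, e1, e2]
  rw [sub_smul (M := StrongDual ℝ X), smul_sub]
  abel

lemma phiC_succ {N k : ℕ} (hk : k < N) (u : ℕ → ℝ) (A : ℕ → StrongDual ℝ X) :
    phiC N u A (k + 1)
      = phiC N u A k - u (N - 1 - k) • (A (N - 1 - k) - A (N - k)) := by
  rw [← phiC_sub hk u A]; abel

lemma psiA_sub {N m : ℕ} (hm : m < N) (u : ℕ → ℝ) (C : ℕ → StrongDual ℝ X) :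
    psiA N u C m - psiA N u C (m + 1)
      = (1 / u m) • (C (N - m - 1) - C (N - m)) := by
  simp only [psiA]
  rw [Finset.sum_eq_sum_Ico_succ_bot hm]
  abel

lemma phiC_psiA {N : ℕ} (u : ℕ → ℝ) (hu : ∀ i ≤ N, 0 < u i)
    (C : ℕ → StrongDual ℝ X) : ∀ k ≤ N, phiC N u (psiA N u C) k = C k := by
  intro k
  induction k with
  | zero =>
    intro _
    have hN : psiA N u C N = (1 / u N) • (-C 0) := by
      simp [psiA]
    rw [phiC_zero, hN, smul_smul, smul_neg, neg_neg,
      mul_one_div_cancel (hu N le_rfl).ne', one_smul]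
  | succ k ih =>
    intro hk1
    have hkN : k < N := by omega
    have hm : N - 1 - k < N := by omega
    have hd := psiA_sub hm u C
    have e1 : N - 1 - k + 1 = N - k := by omega
    have e2 : N - (N - 1 - k) - 1 = k := by omega
    have e3 : N - (N - 1 - k) = k + 1 := by omega
    rw [e1, e2, e3] at hd
    rw [phiC_succ hkN, hd, smul_smul,
      mul_one_div_cancel (hu (N - 1 - k) (by omega)).ne', one_smul, ih (by omega)]
    abel

lemma phiD_psiB {N : ℕ} (D : ℕ → X) : ∀ k ≤ N, phiD N (psiB N D) k = D k := by
  intro k hk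
  have e : N - (N - k) = k := by omega
  simp [phiD, psiB, e]

/-- The key telescoping identity for the first factor of the last sum of `V`. -/
lemma phiC_E {N : ℕ} (u v : ℕ → ℝ) (A : ℕ → StrongDual ℝ X)
    (hu : ∀ i ≤ N, 0 < u i) (hv : ∀ i ≤ N, v i = 1 / u (N - i)) :
    ∀ k < N, v (k + 1) • phiC N u A (k + 1)
        - ∑ j ∈ range (k + 1), (v (j + 1) - v j) • phiC N u A j
      = -A (N - 1 - k) := by
  intro k
  induction k with
  | zero =>
    intro h0
    rw [Finset.sum_range_one]
    have h1 : v 1 • phiC N u A 1 - (v (0 + 1) - v 0) • phiC N u A 0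
        = v 1 • (phiC N u A 1 - phiC N u A 0) + v 0 • phiC N u A 0 := by
      rw [sub_smul (M := StrongDual ℝ X), smul_sub]; abel
    have hd : phiC N u A 1 - phiC N u A 0
        = -(u (N - 1 - 0) • (A (N - 1 - 0) - A (N - 0))) := by
      rw [← phiC_sub h0 u A]; abel
    rw [h1, hd, phiC_zero, smul_neg, smul_smul, smul_neg, smul_smul,
      hv 1 (by omega), hv 0 (by omega)]
    simp only [Nat.sub_zero]
    rw [one_div_mul_cancel (hu (N - 1) (by omega)).ne',
      one_div_mul_cancel (hu N le_rfl).ne', one_smul, one_smul]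
    abel
  | succ k ih =>
    intro hk1
    have hk : k < N := by omega
    rw [Finset.sum_range_succ]
    have h1 : v (k + 1 + 1) • phiC N u A (k + 1 + 1)
          - ((∑ j ∈ range (k + 1), (v (j + 1) - v j) • phiC N u A j)
            + (v (k + 1 + 1) - v (k + 1)) • phiC N u A (k + 1))
        = v (k + 2) • (phiC N u A (k + 2) - phiC N u A (k + 1))
          + (v (k + 1) • phiC N u A (k + 1)
            - ∑ j ∈ range (k + 1), (v (j + 1) - v j) • phiC N u A j) := by
      rw [sub_smul (M := StrongDual ℝ X), smul_sub]
      norm_num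
      abel
    rw [h1, ih hk]
    have hd : phiC N u A (k + 2) - phiC N u A (k + 1)
        = -(u (N - 1 - (k + 1)) • (A (N - 1 - (k + 1)) - A (N - (k + 1)))) := by
      rw [← phiC_sub hk1 u A]; abel
    rw [hd, smul_neg, smul_smul, hv (k + 2) (by omega)]
    have e1 : N - (k + 2) = N - 1 - (k + 1) := by omega
    rw [e1, one_div_mul_cancel (hu (N - 1 - (k + 1)) (by omega)).ne', one_smul]
    have e2 : N - (k + 1) = N - 1 - k := by omega
    rw [e2]
    abel

/-- Reversed cumulative sums of `u_k (Az_k - Az_{k+1})` recover `-phiC`. -/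
lemma sum_uAz {N : ℕ} (u : ℕ → ℝ) (A : ℕ → StrongDual ℝ X) :
    ∀ t ≤ N, ∑ k ∈ Ico (N - t) (N + 1),
        u k • ((if k ≤ N then A k else 0) - (if k + 1 ≤ N then A (k + 1) else 0))
      = -phiC N u A t := by
  intro t
  induction t with
  | zero =>
    intro _
    have e0 : N - 0 = N := by omega
    rw [e0, Nat.Ico_succ_singleton, Finset.sum_singleton, phiC_zero,
      if_pos le_rfl, if_neg (by omega), sub_zero, neg_neg]
  | succ t ih =>
    intro ht
    have h1 : N - (t + 1) < N + 1 := by omega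
    rw [Finset.sum_eq_sum_Ico_succ_bot h1]
    have e : N - (t + 1) + 1 = N - t := by omega
    rw [e, ih (by omega)]
    have hsub := phiC_sub (show t < N by omega) u A
    have e2 : N - 1 - t = N - (t + 1) := by omega
    rw [e2] at hsub
    rw [if_pos (show N - (t + 1) ≤ N by omega), if_pos (show N - t ≤ N by omega)]
    rw [← hsub]
    abel

lemma xAux_eq (b : ℕ → ℕ → ℝ) (hb00 : b 0 0 = -1) (B : ℕ → X) (k : ℕ) :
    xAux X b B k = -∑ j ∈ range (k + 1), ∑ i ∈ range (j + 1), b j i • B i := by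
  rw [show xAux X b B k
      = B 0 - ∑ j ∈ range k, ∑ i ∈ range (j + 2), b (j + 1) i • B i from rfl]
  rw [Finset.sum_range_succ' (fun j => ∑ i ∈ range (j + 1), b j i • B i) k]
  simp only [show ∀ j : ℕ, j + 1 + 1 = j + 2 from fun _ => rfl]
  rw [Finset.sum_range_one, hb00, neg_one_smul]
  abel

lemma xAux_congr {N : ℕ} (b : ℕ → ℕ → ℝ) {B B' : ℕ → X}
    (hB : ∀ i ≤ N, B i = B' i) {k : ℕ} (hk : k ≤ N) :
    xAux X b B k = xAux X b B' k := by
  simp only [xAux]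
  rw [hB 0 (by omega)]
  congr 1
  refine Finset.sum_congr rfl fun j hj => Finset.sum_congr rfl fun i hi => ?_
  have hj' := mem_range.mp hj
  have hi' := mem_range.mp hi
  rw [hB i (by omega)]

lemma primalU_congr {N : ℕ} {L σ : ℝ} {u : ℕ → ℝ} {a b : ℕ → ℕ → ℝ}
    {A A' : ℕ → StrongDual ℝ X} {B B' : ℕ → X}
    (hA : ∀ i ≤ N, A i = A' i) (hB : ∀ i ≤ N, B i = B' i) :
    primalU X N L σ u a b A B = primalU X N L σ u a b A' B' := by
  simp only [primalU]
  congr 1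
  · congr 1
    · congr 1
      · refine Finset.sum_congr rfl fun k hk => ?_
        have hk' := mem_range.mp hk
        rw [hA k (by omega), hA (k + 1) (by omega)]
      · refine Finset.sum_congr rfl fun k hk => ?_
        have hk' := mem_range.mp hk
        rw [hB k (by omega), hB (k + 1) (by omega)]
    · refine Finset.sum_congr rfl fun k hk => ?_
      have hk' := mem_range.mp hk
      rw [hB (k + 1) (by omega)]
      congr 1
      refine Finset.sum_congr rfl fun i hi => ?_
      have hi' := mem_range.mp hi
      rw [hA i (by omega)]
  · refine Finset.sum_congr rfl fun k hk => ?_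
    have hk' := mem_range.mp hk
    rw [xAux_congr b hB (show k ≤ N by omega),
      show (if k ≤ N then A k else 0) = (if k ≤ N then A' k else 0) from by
        split_ifs with h; exacts [hA k h, rfl],
      show (if k + 1 ≤ N then A (k + 1) else 0)
          = (if k + 1 ≤ N then A' (k + 1) else 0) from by
        split_ifs with h; exacts [hA (k + 1) h, rfl]]

lemma dualV_congr {N : ℕ} {L σ : ℝ} {v : ℕ → ℝ} {a b : ℕ → ℕ → ℝ}
    {C C' : ℕ → StrongDual ℝ X} {D D' : ℕ → X}
    (hC : ∀ i ≤ N, C i = C' i) (hD : ∀ i ≤ N, D i = D' i) :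
    dualV X N L σ v a b C D = dualV X N L σ v a b C' D' := by
  simp only [dualV]
  congr 1
  · congr 1
    · congr 1
      · refine Finset.sum_congr rfl fun k hk => ?_
        have hk' := mem_range.mp hk
        rw [hC k (by omega), hC (k + 1) (by omega)]
      · refine Finset.sum_congr rfl fun k hk => ?_
        have hk' := mem_range.mp hk
        rw [hD k (by omega), hD (k + 1) (by omega)]
    · refine Finset.sum_congr rfl fun k hk => ?_
      have hk' := mem_range.mp hk
      rw [hD k (by omega)]
      congr 1
      refine Finset.sum_congr rfl fun i hi => ?_
      have hi' := mem_range.mp hi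
      rw [hC i (by omega)]
  · refine Finset.sum_congr rfl fun k hk => ?_
    have hk' := mem_range.mp hk
    congr 1
    · rw [hC (k + 1) (by omega)]
      congr 1
      refine Finset.sum_congr rfl fun j hj => ?_
      have hj' := mem_range.mp hj
      rw [hC j (by omega)]
    · refine Finset.sum_congr rfl fun i hi => ?_
      have hi' := mem_range.mp hi
      rw [hD i (by omega)]

end MirrorDualityAux

namespace MirrorDualityAux
variable {X : Type*} [NormedAddCommGroup X] [NormedSpace ℝ X]
open NormedSpace Finset

lemma main_identity (L σ : ℝ) (N : ℕ) (a b : ℕ → ℕ → ℝ) (hb00 : b 0 0 = -1)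
    (u v : ℕ → ℝ) (hL : L ≠ 0) (hu : ∀ i ≤ N, 0 < u i)
    (hv : ∀ i ≤ N, v i = 1 / u (N - i))
    (A : ℕ → StrongDual ℝ X) (B : ℕ → X) :
    dualV X N L σ v a b (phiC N u A) (phiD N B) = primalU X N L σ u a b A B := by
  simp only [dualV, primalU]
  -- Abbreviation for `Az k - Az (k+1)`:
  set G : ℕ → StrongDual ℝ X :=
    fun k => (if k ≤ N then A k else 0) - (if k + 1 ≤ N then A (k + 1) else 0) with hG
  -- 1) the dual-norm terms
  have hC : ∑ k ∈ range N, v (k + 1) / (2 * L) * ‖phiC N u A k - phiC N u A (k + 1)‖ ^ 2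
      = ∑ k ∈ range N, u k / (2 * L) * ‖A k - A (k + 1)‖ ^ 2 := by
    rw [← Finset.sum_range_reflect (fun k => u k / (2 * L) * ‖A k - A (k + 1)‖ ^ 2) N]
    refine Finset.sum_congr rfl fun k hk => ?_
    have hk' := mem_range.mp hk
    rw [phiC_sub hk' u A, hv (k + 1) (by omega),
      show N - (k + 1) = N - 1 - k from by omega,
      show N - 1 - k + 1 = N - k from by omega,
      norm_smul, Real.norm_eq_abs, abs_of_pos (hu (N - 1 - k) (by omega))]
    have hne : u (N - 1 - k) ≠ 0 := (hu (N - 1 - k) (by omega)).ne'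
    field_simp
  -- 2) the primal-norm terms
  have hD : ∑ k ∈ range N, σ / 2 * ‖phiD N B k - phiD N B (k + 1)‖ ^ 2
      = ∑ k ∈ range N, σ / 2 * ‖B k - B (k + 1)‖ ^ 2 := by
    rw [← Finset.sum_range_reflect (fun k => σ / 2 * ‖B k - B (k + 1)‖ ^ 2) N]
    refine Finset.sum_congr rfl fun k hk => ?_
    have hk' := mem_range.mp hk
    have hsub : phiD N B k - phiD N B (k + 1) = B (N - 1 - k) - B (N - k) := by
      simp only [phiD, show N - (k + 1) = N - 1 - k from by omega]
      abel
    rw [show N - 1 - k + 1 = N - k from by omega, hsub]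
  -- 3) the `a`-pairing terms
  have hT4 : ∑ k ∈ range N,
        (v (k + 1) • phiC N u A (k + 1) -
            ∑ j ∈ range (k + 1), (v (j + 1) - v j) • phiC N u A j)
          (∑ i ∈ range (k + 1), a (N - i) (N - 1 - k) • phiD N B i)
      = ∑ k ∈ range N, (∑ i ∈ range (k + 1), a (k + 1) i • A i) (B (k + 1)) := by
    have step1 : ∑ k ∈ range N,
        (v (k + 1) • phiC N u A (k + 1) -
            ∑ j ∈ range (k + 1), (v (j + 1) - v j) • phiC N u A j)
          (∑ i ∈ range (k + 1), a (N - i) (N - 1 - k) • phiD N B i)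
        = ∑ k ∈ range N, ∑ i ∈ range (k + 1),
            a (N - i) (N - 1 - k) * (A (N - 1 - k)) (B (N - i)) := by
      refine Finset.sum_congr rfl fun k hk => ?_
      rw [phiC_E u v A hu hv k (mem_range.mp hk), map_sum]
      refine Finset.sum_congr rfl fun i hi => ?_
      simp only [phiD, map_smul, smul_eq_mul, ContinuousLinearMap.neg_apply, map_neg,
        neg_neg]
    rw [step1]
    -- reflect the left-hand side
    rw [← Finset.sum_range_reflect
      (fun k => ∑ i ∈ range (k + 1), a (N - i) (N - 1 - k) * (A (N - 1 - k)) (B (N - i))) N]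
    -- expand the right-hand side and swap the triangle
    have step2 : ∑ k ∈ range N, (∑ i ∈ range (k + 1), a (k + 1) i • A i) (B (k + 1))
        = ∑ k ∈ range N, ∑ i ∈ range (k + 1), a (k + 1) i * (A i) (B (k + 1)) := by
      refine Finset.sum_congr rfl fun k hk => ?_
      simp only [ContinuousLinearMap.sum_apply, ContinuousLinearMap.smul_apply,
        smul_eq_mul]
    rw [step2, sum_tri N (fun k j => a (k + 1) j * (A j) (B (k + 1)))]
    refine Finset.sum_congr rfl fun k hk => ?_
    have hk' := mem_range.mp hk
    -- RHS inner sum over `Ico k N`, shift to range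
    rw [Finset.sum_Ico_eq_sum_range]
    -- LHS term at `N - 1 - k`
    rw [show N - 1 - (N - 1 - k) = k from by omega,
      show N - 1 - k + 1 = N - k from by omega]
    -- now LHS : ∑ i ∈ range (N - k), a (N - i) k * (A k) (B (N - i))
    rw [← Finset.sum_range_reflect
      (fun i => a (N - i) k * (A k) (B (N - i))) (N - k)]
    refine Finset.sum_congr rfl fun i hi => ?_
    have hi' := mem_range.mp hi
    rw [show N - (N - k - 1 - i) = k + i + 1 from by omega]
  -- 4) the `b`-pairing terms
  have hT3 : ∑ k ∈ range (N + 1),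
        (∑ i ∈ range (k + 1), b (N - i) (N - k) • phiC N u A i) (phiD N B k)
      = -∑ k ∈ range (N + 1), u k * (G k) (xAux X b B k) := by
    -- rewrite the U-side
    have hU4 : ∑ k ∈ range (N + 1), u k * (G k) (xAux X b B k)
        = ∑ k ∈ range (N + 1), ∑ j ∈ range (k + 1),
            (-(∑ i ∈ range (j + 1), b j i * (u k * (G k) (B i)))) := by
      refine Finset.sum_congr rfl fun k hk => ?_
      rw [xAux_eq b hb00 B k, map_neg, mul_neg, map_sum, Finset.mul_sum,
        ← Finset.sum_neg_distrib]
      refine Finset.sum_congr rfl fun j hj => ?_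
      rw [map_sum, Finset.mul_sum, ← Finset.sum_neg_distrib, ← Finset.sum_neg_distrib]
      refine Finset.sum_congr rfl fun i hi => ?_
      rw [map_smul, smul_eq_mul]
      ring
    have hU4' : ∑ k ∈ range (N + 1), u k * (G k) (xAux X b B k)
        = ∑ j ∈ range (N + 1), ∑ i ∈ range (j + 1),
            b j i * (phiC N u A (N - j)) (B i) := by
      rw [hU4]
      simp only [Finset.sum_neg_distrib]
      rw [sum_tri (N + 1)
        (fun k j => ∑ i ∈ range (j + 1), b j i * (u k * (G k) (B i)))]
      rw [← Finset.sum_neg_distrib]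
      refine Finset.sum_congr rfl fun j hj => ?_
      have hj' := mem_range.mp hj
      rw [Finset.sum_comm, ← Finset.sum_neg_distrib]
      refine Finset.sum_congr rfl fun i hi => ?_
      have hsum : ∑ k ∈ Ico j (N + 1), b j i * (u k * (G k) (B i))
          = b j i * ((∑ k ∈ Ico j (N + 1), u k • G k) (B i)) := by
        rw [ContinuousLinearMap.sum_apply, Finset.mul_sum]
        refine Finset.sum_congr rfl fun k hk => ?_
        rw [ContinuousLinearMap.smul_apply, smul_eq_mul]
      rw [hsum]
      have huz := sum_uAz (N := N) u A (N - j) (Nat.sub_le N j)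
      rw [show N - (N - j) = j from by omega] at huz
      rw [hG, huz, ContinuousLinearMap.neg_apply]
      ring
    have step1 : ∀ k ∈ range (N + 1),
        (∑ i ∈ range (k + 1), b (N - i) (N - k) • phiC N u A i) (phiD N B k)
        = -(∑ i ∈ range (k + 1), b (N - i) (N - k) * (phiC N u A i) (B (N - k))) := by
      intro k hk
      simp only [phiD, ContinuousLinearMap.sum_apply, ContinuousLinearMap.smul_apply,
        smul_eq_mul, map_neg, mul_neg, Finset.sum_neg_distrib]
    rw [hU4', Finset.sum_congr rfl step1, Finset.sum_neg_distrib, neg_inj]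
    conv_rhs => rw [sum_tri (N + 1) (fun j i => b j i * (phiC N u A (N - j)) (B i))]
    rw [← Finset.sum_range_reflect
      (fun k => ∑ i ∈ range (k + 1), b (N - i) (N - k) * (phiC N u A i) (B (N - k)))
      (N + 1)]
    refine Finset.sum_congr rfl fun k hk => ?_
    have hk' := mem_range.mp hk
    rw [show N + 1 - 1 - k = N - k from by omega,
      show N - (N - k) = k from by omega]
    rw [Finset.sum_Ico_eq_sum_range, show N + 1 - k = N - k + 1 from by omega,
      ← Finset.sum_range_reflect (fun i => b (N - i) k * (phiC N u A i) (B k))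
        (N - k + 1)]
    refine Finset.sum_congr rfl fun i hi => ?_
    have hi' := mem_range.mp hi
    rw [show N - (N - k + 1 - 1 - i) = k + i from by omega,
      show N - k + 1 - 1 - i = N - (k + i) from by omega]
  rw [hC, hD, hT4, hT3]
  ring

end MirrorDualityAux

/-- **Mirror Duality.** For a reflexive Banach space `X`, `L > 0`,
`σ > 0`, `N ≥ 1`, coefficients `a, b` with `b 0 0 = -1`, positive nondecreasing
`u_0 ≤ … ≤ u_N`, and `v_i = 1/u_{N-i}`, the infimum of the primal residual
functional `U` over all `(A, B) ∈ (X*)^{N+1} × X^{N+1}` equals the infimum of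
the dual residual functional `V` over all `(C, D) ∈ (X*)^{N+1} × X^{N+1}`
(as values in `ℝ ∪ {-∞}`, i.e. in `EReal`). -/
theorem mirror_duality
    [CompleteSpace X] (hrefl : Function.Surjective (inclusionInDoubleDual ℝ X))
    (L σ : ℝ) (hL : 0 < L) (hσ : 0 < σ)
    (N : ℕ) (hN : 1 ≤ N)
    (a b : ℕ → ℕ → ℝ) (hb00 : b 0 0 = -1)
    (u v : ℕ → ℝ)
    (hu_pos : ∀ i ≤ N, 0 < u i)
    (hu_mono : ∀ i, i < N → u i ≤ u (i + 1))
    (hv : ∀ i ≤ N, v i = 1 / u (N - i)) :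
    (⨅ (A : Fin (N + 1) → StrongDual ℝ X) (B : Fin (N + 1) → X),
        (primalU X N L σ u a b (extZ N A) (extZ N B) : EReal))
      = ⨅ (C : Fin (N + 1) → StrongDual ℝ X) (D : Fin (N + 1) → X),
          (dualV X N L σ v a b (extZ N C) (extZ N D) : EReal) := by
  have hL' : L ≠ 0 := ne_of_gt hL
  apply le_antisymm
  · refine le_iInf fun C => le_iInf fun D => ?_
    refine iInf_le_of_le (fun m => MirrorDualityAux.psiA N u (extZ N C) m.val) ?_
    refine iInf_le_of_le (fun m => MirrorDualityAux.psiB N (extZ N D) m.val) ?_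
    apply le_of_eq
    have h1 : primalU X N L σ u a b
        (extZ N (fun m => MirrorDualityAux.psiA N u (extZ N C) m.val))
        (extZ N (fun m => MirrorDualityAux.psiB N (extZ N D) m.val))
        = primalU X N L σ u a b (MirrorDualityAux.psiA N u (extZ N C))
            (MirrorDualityAux.psiB N (extZ N D)) := by
      apply MirrorDualityAux.primalU_congr
      · intro i hi; simp only [extZ]; rw [dif_pos (show i < N + 1 by omega)]
      · intro i hi; simp only [extZ]; rw [dif_pos (show i < N + 1 by omega)]
    have h2 := MirrorDualityAux.main_identity L σ N a b hb00 u v hL' hu_pos hv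
        (MirrorDualityAux.psiA N u (extZ N C)) (MirrorDualityAux.psiB N (extZ N D))
    have h3 : dualV X N L σ v a b
        (MirrorDualityAux.phiC N u (MirrorDualityAux.psiA N u (extZ N C)))
        (MirrorDualityAux.phiD N (MirrorDualityAux.psiB N (extZ N D)))
        = dualV X N L σ v a b (extZ N C) (extZ N D) := by
      apply MirrorDualityAux.dualV_congr
      · exact MirrorDualityAux.phiC_psiA u hu_pos (extZ N C)
      · exact MirrorDualityAux.phiD_psiB (extZ N D)
    exact congrArg Real.toEReal (by rw [h1, ← h2, h3])
  · refine le_iInf fun A => le_iInf fun B => ?_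
    refine iInf_le_of_le (fun m => MirrorDualityAux.phiC N u (extZ N A) m.val) ?_
    refine iInf_le_of_le (fun m => MirrorDualityAux.phiD N (extZ N B) m.val) ?_
    apply le_of_eq
    have h1 : dualV X N L σ v a b
        (extZ N (fun m => MirrorDualityAux.phiC N u (extZ N A) m.val))
        (extZ N (fun m => MirrorDualityAux.phiD N (extZ N B) m.val))
        = dualV X N L σ v a b (MirrorDualityAux.phiC N u (extZ N A))
            (MirrorDualityAux.phiD N (extZ N B)) := by
      apply MirrorDualityAux.dualV_congr
      · intro i hi; simp only [extZ]; rw [dif_pos (show i < N + 1 by omega)]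
      · intro i hi; simp only [extZ]; rw [dif_pos (show i < N + 1 by omega)]
    have h2 := MirrorDualityAux.main_identity L σ N a b hb00 u v hL' hu_pos hv
        (extZ N A) (extZ N B)
    exact congrArg Real.toEReal (by rw [h1, h2])

end MirrorDuality
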